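/- arXiv:0910.5264 — 2 statements merged into one kernel-verified Lean document; each statement's English description precedes it below -/
import Mathlib

section
/- Let H ∈ {0,1}, π a Π-valued belief, consistency as above, and let Y be a new observation with P(Y=y|H=h, π) = f_h(y) and updated belief π' = T(π,Y) where T(p,y) = p f₀(y)/(p f₀(y) + (1-p) f₁(y)) (defined when the denominator is positive). Then the pushed-forward joint law of (H, π') given by (Q²ξ)(h, q) = Σ_{π₀,y} 1[T(π₀,y)=q] f_h(y) ξ(h,π₀) also satisfies the consistency property: (Q²ξ)({0}×{q}) = q · (Q²ξ)({0,1}×{q}) whenever the latter is positive. -/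
open scoped Classical

/-- the belief-propagation transformation `Q²` of Lemma 3
preserves the posterior-consistency property of the information state.
`v π₀` is the real belief value attached to `π₀ : B`, and `Tm` is the Bayes
belief-update map on belief values. -/
theorem consistency_preserved_by_propagation {B 𝒴 : Type*} [Fintype B] [Fintype 𝒴]
    (v : B → ℝ) (hv : ∀ π₀, v π₀ ∈ Set.Icc (0:ℝ) 1)
    (f : Fin 2 → 𝒴 → ℝ) (hfnn : ∀ h y, 0 ≤ f h y) (hfs : ∀ h, ∑ y, f h y = 1)
    (Tm : B → 𝒴 → B)
    (hTm : ∀ π₀ y, 0 < v π₀ * f 0 y + (1 - v π₀) * f 1 y →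
      v (Tm π₀ y) = v π₀ * f 0 y / (v π₀ * f 0 y + (1 - v π₀) * f 1 y))
    (ξ : Fin 2 × B → ℝ) (hξnn : ∀ x, 0 ≤ ξ x) (hξsum : ∑ x, ξ x = 1)
    (hcons : ∀ π₀, 0 < ξ (0, π₀) + ξ (1, π₀) →
      ξ (0, π₀) = v π₀ * (ξ (0, π₀) + ξ (1, π₀)))
    (η : Fin 2 × B → ℝ)
    (hη : ∀ h q, η (h, q) =
      ∑ π₀, ∑ y, (if Tm π₀ y = q then (1:ℝ) else 0) * f h y * ξ (h, π₀)) :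
    ∀ q, 0 < η (0, q) + η (1, q) → η (0, q) = v q * (η (0, q) + η (1, q)) := by
  intro q hq
  have key : ∀ π₀ : B, ∀ y : 𝒴,
      (if Tm π₀ y = q then (1:ℝ) else 0) * f 0 y * ξ (0, π₀) =
      v q * ((if Tm π₀ y = q then (1:ℝ) else 0) * f 0 y * ξ (0, π₀) +
             (if Tm π₀ y = q then (1:ℝ) else 0) * f 1 y * ξ (1, π₀)) := by
    intro π₀ y
    by_cases hT : Tm π₀ y = q
    · simp only [hT, if_true, one_mul]
      set p := v π₀ with hp
      by_cases hspos : 0 < ξ (0, π₀) + ξ (1, π₀)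
      · have hξ0 : ξ (0, π₀) = p * (ξ (0, π₀) + ξ (1, π₀)) := hcons π₀ hspos
        set s := ξ (0, π₀) + ξ (1, π₀) with hs
        have hξ1 : ξ (1, π₀) = (1 - p) * s := by
          have h1 : ξ (1, π₀) = s - ξ (0, π₀) := by rw [hs]; ring
          rw [h1, hξ0]; ring
        by_cases hdpos : 0 < p * f 0 y + (1 - p) * f 1 y
        · have hvq : v q = p * f 0 y / (p * f 0 y + (1 - p) * f 1 y) := by
            rw [← hT]; exact hTm π₀ y hdpos
          rw [hvq, hξ0, hξ1]
          have hne : p * f 0 y + (1 - p) * f 1 y ≠ 0 := ne_of_gt hdpos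
          rw [div_mul_eq_mul_div, eq_div_iff hne]
          ring
        · have hp0 : 0 ≤ p := (hv π₀).1
          have hp1 : p ≤ 1 := (hv π₀).2
          have h1 : 0 ≤ p * f 0 y := mul_nonneg hp0 (hfnn 0 y)
          have h2 : 0 ≤ (1 - p) * f 1 y := mul_nonneg (by linarith) (hfnn 1 y)
          have ha : p * f 0 y = 0 := by
            have := not_lt.mp hdpos; linarith
          have hb : (1 - p) * f 1 y = 0 := by
            have := not_lt.mp hdpos; linarith
          rw [hξ0, hξ1]
          have e0 : f 0 y * (p * s) = 0 := by
            rw [show f 0 y * (p * s) = (p * f 0 y) * s from by ring, ha, zero_mul]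
          have e1 : f 1 y * ((1 - p) * s) = 0 := by
            rw [show f 1 y * ((1 - p) * s) = ((1 - p) * f 1 y) * s from by ring, hb,
              zero_mul]
          rw [e0, e1]; ring
      · have h0 := hξnn (0, π₀)
        have h1 := hξnn (1, π₀)
        have hle := not_lt.mp hspos
        have hs0 : ξ (0, π₀) = 0 := by linarith
        have hs1 : ξ (1, π₀) = 0 := by linarith
        rw [hs0, hs1]; ring
    · simp [hT]
  have e : (∑ π₀, ∑ y, (if Tm π₀ y = q then (1:ℝ) else 0) * f 0 y * ξ (0, π₀)) =
      ∑ π₀, ∑ y, v q * ((if Tm π₀ y = q then (1:ℝ) else 0) * f 0 y * ξ (0, π₀) +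
             (if Tm π₀ y = q then (1:ℝ) else 0) * f 1 y * ξ (1, π₀)) :=
    Finset.sum_congr rfl fun π₀ _ => Finset.sum_congr rfl fun y _ => key π₀ y
  have h2 : (∑ π₀, ∑ y, (if Tm π₀ y = q then (1:ℝ) else 0) * f 0 y * ξ (0, π₀)) =
      v q * ((∑ π₀, ∑ y, (if Tm π₀ y = q then (1:ℝ) else 0) * f 0 y * ξ (0, π₀)) +
             (∑ π₀, ∑ y, (if Tm π₀ y = q then (1:ℝ) else 0) * f 1 y * ξ (1, π₀))) := by
    conv_lhs => rw [e]
    simp only [mul_add, Finset.sum_add_distrib, ← Finset.mul_sum]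
  rw [hη 0 q, hη 1 q]
  exact h2
end

section
/- Let H ∈ {0,1}, π¹ and π² be belief-valued random variables, D ∈ {0,1} an indicator, and suppose observer 2's new observation Y² satisfies P(Y²=y | H, π¹, π², D, past) = f_H(y). Let observer 2's stopping rule at time t be: continue (D'=1) iff D=1 and π²' := T(π², Y²) ∈ (α², β²); set D'=0 otherwise, in which case π²' is frozen at its stopped value. Then the joint law of (H, π¹, π²', D') is a measurable function of the joint law of (H, π¹, π², D), the thresholds (α², β²), and the likelihoods f₀, f₁ — i.e., there is a transformation Q² with ψ' = Q²(φ, γ²). -/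
open scoped Classical
open Finset

/-- Probability of an event on a finite space with weights `P`. -/
noncomputable def Pr {Ω : Type*} [Fintype Ω] (P : Ω → ℝ) (E : Ω → Prop) : ℝ :=
  ∑ ω, if E ω then P ω else 0

/-- Conditional probability `P(E | F)`. -/
noncomputable def cPr {Ω : Type*} [Fintype Ω] (P : Ω → ℝ) (E F : Ω → Prop) : ℝ :=
  Pr P (fun ω => E ω ∧ F ω) / Pr P F

lemma Pr_nonneg {Ω : Type*} [Fintype Ω] (P : Ω → ℝ) (hP : ∀ ω, 0 ≤ P ω) (E : Ω → Prop) :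
    0 ≤ Pr P E := by
  refine Finset.sum_nonneg fun ω _ => ?_
  split <;> simp [hP ω]

lemma Pr_mono {Ω : Type*} [Fintype Ω] (P : Ω → ℝ) (hP : ∀ ω, 0 ≤ P ω) {E F : Ω → Prop}
    (h : ∀ ω, E ω → F ω) : Pr P E ≤ Pr P F := by
  refine Finset.sum_le_sum fun ω _ => ?_
  by_cases hE : E ω
  · simp [hE, h ω hE]
  · simp only [if_neg hE]
    split <;> simp [hP ω]

lemma Pr_congr {Ω : Type*} [Fintype Ω] (P : Ω → ℝ) {E F : Ω → Prop}
    (h : ∀ ω, E ω ↔ F ω) : Pr P E = Pr P F := by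
  unfold Pr
  refine Finset.sum_congr rfl fun ω _ => ?_
  rw [if_congr (h ω) rfl rfl]

lemma stepA {Ω B1 𝒴 : Type*} [Fintype Ω] [Fintype B1] [Fintype 𝒴]
    (f : Fin 2 → 𝒴 → ℝ) (P : Ω → ℝ) (hPnn : ∀ ω, 0 ≤ P ω)
    (H : Ω → Fin 2) (π1 : Ω → B1) (π2 : Ω → ℝ) (D : Ω → Bool) (Y2 : Ω → 𝒴)
    (hci : ∀ (y : 𝒴) (h : Fin 2) (q1 : B1) (q2 : ℝ) (d : Bool),
      0 < Pr P (fun ω => H ω = h ∧ π1 ω = q1 ∧ π2 ω = q2 ∧ D ω = d) →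
      cPr P (fun ω => Y2 ω = y)
        (fun ω => H ω = h ∧ π1 ω = q1 ∧ π2 ω = q2 ∧ D ω = d) = f h y)
    (y : 𝒴) (h : Fin 2) (q1 : B1) (q2 : ℝ) (d : Bool) :
    Pr P (fun ω => Y2 ω = y ∧ (H ω = h ∧ π1 ω = q1 ∧ π2 ω = q2 ∧ D ω = d)) =
      f h y * Pr P (fun ω => H ω = h ∧ π1 ω = q1 ∧ π2 ω = q2 ∧ D ω = d) := by
  rcases (Pr_nonneg P hPnn (fun ω => H ω = h ∧ π1 ω = q1 ∧ π2 ω = q2 ∧ D ω = d)).lt_or_eq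
    with hpos | h0
  · have hc := hci y h q1 q2 d hpos
    unfold cPr at hc
    rw [div_eq_iff hpos.ne'] at hc
    exact hc
  · have h1 : Pr P (fun ω => Y2 ω = y ∧ (H ω = h ∧ π1 ω = q1 ∧ π2 ω = q2 ∧ D ω = d)) ≤
        Pr P (fun ω => H ω = h ∧ π1 ω = q1 ∧ π2 ω = q2 ∧ D ω = d) :=
      Pr_mono P hPnn fun ω hω => hω.2
    have h2 := Pr_nonneg P hPnn
      (fun ω => Y2 ω = y ∧ (H ω = h ∧ π1 ω = q1 ∧ π2 ω = q2 ∧ D ω = d))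
    rw [← h0, mul_zero]
    linarith [h0 ▸ h1]

lemma keyLemma {Ω B1 𝒴 : Type*} [Fintype Ω] [Fintype B1] [Fintype 𝒴]
    (f : Fin 2 → 𝒴 → ℝ) (P : Ω → ℝ) (hPnn : ∀ ω, 0 ≤ P ω)
    (H : Ω → Fin 2) (π1 : Ω → B1) (π2 : Ω → ℝ) (D : Ω → Bool) (Y2 : Ω → 𝒴)
    (hci : ∀ (y : 𝒴) (h : Fin 2) (q1 : B1) (q2 : ℝ) (d : Bool),
      0 < Pr P (fun ω => H ω = h ∧ π1 ω = q1 ∧ π2 ω = q2 ∧ D ω = d) →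
      cPr P (fun ω => Y2 ω = y)
        (fun ω => H ω = h ∧ π1 ω = q1 ∧ π2 ω = q2 ∧ D ω = d) = f h y)
    (S : Finset ℝ) (hS : ∀ ω, π2 ω ∈ S)
    (φ : Fin 2 → B1 → ℝ → Bool → 𝒴 → Prop) :
    Pr P (fun ω => φ (H ω) (π1 ω) (π2 ω) (D ω) (Y2 ω)) =
      ∑ h, ∑ q1, ∑ q2 ∈ S, ∑ d, ∑ y,
        (if φ h q1 q2 d y then
          f h y * Pr P (fun ω => H ω = h ∧ π1 ω = q1 ∧ π2 ω = q2 ∧ D ω = d) else 0) := by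
  symm
  have claim1 : ∀ (h : Fin 2) (q1 : B1) (q2 : ℝ) (d : Bool) (y : 𝒴),
      (if φ h q1 q2 d y then
        f h y * Pr P (fun ω => H ω = h ∧ π1 ω = q1 ∧ π2 ω = q2 ∧ D ω = d) else 0) =
      ∑ ω, (if φ h q1 q2 d y ∧ Y2 ω = y ∧ H ω = h ∧ π1 ω = q1 ∧ π2 ω = q2 ∧ D ω = d
        then P ω else 0) := by
    intro h q1 q2 d y
    by_cases hφ : φ h q1 q2 d y
    · rw [if_pos hφ, ← stepA f P hPnn H π1 π2 D Y2 hci y h q1 q2 d]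
      unfold Pr
      exact Finset.sum_congr rfl fun ω _ =>
        ite_congr (propext (by tauto)) (fun _ => rfl) (fun _ => rfl)
    · simp [hφ]
  calc
    ∑ h, ∑ q1, ∑ q2 ∈ S, ∑ d, ∑ y,
        (if φ h q1 q2 d y then
          f h y * Pr P (fun ω => H ω = h ∧ π1 ω = q1 ∧ π2 ω = q2 ∧ D ω = d) else 0)
      = ∑ h, ∑ q1, ∑ q2 ∈ S, ∑ d, ∑ y, ∑ ω,
          (if φ h q1 q2 d y ∧ Y2 ω = y ∧ H ω = h ∧ π1 ω = q1 ∧ π2 ω = q2 ∧ D ω = d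
            then P ω else 0) := by
        refine Finset.sum_congr rfl fun h _ => Finset.sum_congr rfl fun q1 _ =>
          Finset.sum_congr rfl fun q2 _ => Finset.sum_congr rfl fun d _ =>
          Finset.sum_congr rfl fun y _ => claim1 h q1 q2 d y
    _ = ∑ h, ∑ q1, ∑ q2 ∈ S, ∑ d, ∑ ω, ∑ y,
          (if φ h q1 q2 d y ∧ Y2 ω = y ∧ H ω = h ∧ π1 ω = q1 ∧ π2 ω = q2 ∧ D ω = d
            then P ω else 0) :=
        Finset.sum_congr rfl fun h _ => Finset.sum_congr rfl fun q1 _ =>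
          Finset.sum_congr rfl fun q2 _ => Finset.sum_congr rfl fun d _ =>
          Finset.sum_comm
    _ = ∑ h, ∑ q1, ∑ q2 ∈ S, ∑ ω, ∑ d, ∑ y,
          (if φ h q1 q2 d y ∧ Y2 ω = y ∧ H ω = h ∧ π1 ω = q1 ∧ π2 ω = q2 ∧ D ω = d
            then P ω else 0) :=
        Finset.sum_congr rfl fun h _ => Finset.sum_congr rfl fun q1 _ =>
          Finset.sum_congr rfl fun q2 _ => Finset.sum_comm
    _ = ∑ h, ∑ q1, ∑ ω, ∑ q2 ∈ S, ∑ d, ∑ y,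
          (if φ h q1 q2 d y ∧ Y2 ω = y ∧ H ω = h ∧ π1 ω = q1 ∧ π2 ω = q2 ∧ D ω = d
            then P ω else 0) :=
        Finset.sum_congr rfl fun h _ => Finset.sum_congr rfl fun q1 _ =>
          Finset.sum_comm
    _ = ∑ h, ∑ ω, ∑ q1, ∑ q2 ∈ S, ∑ d, ∑ y,
          (if φ h q1 q2 d y ∧ Y2 ω = y ∧ H ω = h ∧ π1 ω = q1 ∧ π2 ω = q2 ∧ D ω = d
            then P ω else 0) :=
        Finset.sum_congr rfl fun h _ => Finset.sum_comm
    _ = ∑ ω, ∑ h, ∑ q1, ∑ q2 ∈ S, ∑ d, ∑ y,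
          (if φ h q1 q2 d y ∧ Y2 ω = y ∧ H ω = h ∧ π1 ω = q1 ∧ π2 ω = q2 ∧ D ω = d
            then P ω else 0) := Finset.sum_comm
    _ = ∑ ω, (if φ (H ω) (π1 ω) (π2 ω) (D ω) (Y2 ω) then P ω else 0) := by
        refine Finset.sum_congr rfl fun ω _ => ?_
        refine (Finset.sum_eq_single_of_mem (H ω) (Finset.mem_univ _) ?_).trans ?_
        · intro b _ hb
          refine Finset.sum_eq_zero fun q1 _ => Finset.sum_eq_zero fun q2 _ =>
            Finset.sum_eq_zero fun d _ => Finset.sum_eq_zero fun y _ => ?_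
          simp [Ne.symm hb]
        refine (Finset.sum_eq_single_of_mem (π1 ω) (Finset.mem_univ _) ?_).trans ?_
        · intro b _ hb
          refine Finset.sum_eq_zero fun q2 _ =>
            Finset.sum_eq_zero fun d _ => Finset.sum_eq_zero fun y _ => ?_
          simp [Ne.symm hb]
        refine (Finset.sum_eq_single_of_mem (π2 ω) (hS ω) ?_).trans ?_
        · intro b _ hb
          refine Finset.sum_eq_zero fun d _ => Finset.sum_eq_zero fun y _ => ?_
          simp [Ne.symm hb]
        refine (Finset.sum_eq_single_of_mem (D ω) (Finset.mem_univ _) ?_).trans ?_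
        · intro b _ hb
          refine Finset.sum_eq_zero fun y _ => ?_
          simp [Ne.symm hb]
        refine (Finset.sum_eq_single_of_mem (Y2 ω) (Finset.mem_univ _) ?_).trans ?_
        · intro b _ hb
          simp [Ne.symm hb]
        simp
    _ = Pr P (fun ω => φ (H ω) (π1 ω) (π2 ω) (D ω) (Y2 ω)) := rfl

/-- Lemma 4(ii): the joint law of `(H, π¹, π²', D')` after
observer 2's update and stopping decision is determined by the joint law of
`(H, π¹, π², D)`, the thresholds `(α², β²)`, and the likelihoods `f`: any two
systems with the same prior joint law, likelihoods, belief-update map and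
thresholds induce the same updated joint law. -/
theorem observer2_update_transformation {Ω Ω' B1 𝒴 : Type*}
    [Fintype Ω] [Fintype Ω'] [Fintype B1] [Fintype 𝒴]
    (f : Fin 2 → 𝒴 → ℝ) (Tm : ℝ → 𝒴 → ℝ) (α β : ℝ)
    -- system 1
    (P : Ω → ℝ) (hPnn : ∀ ω, 0 ≤ P ω) (hPsum : ∑ ω, P ω = 1)
    (H : Ω → Fin 2) (π1 : Ω → B1) (π2 : Ω → ℝ) (D : Ω → Bool) (Y2 : Ω → 𝒴)
    (hci : ∀ (y : 𝒴) (h : Fin 2) (q1 : B1) (q2 : ℝ) (d : Bool),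
      0 < Pr P (fun ω => H ω = h ∧ π1 ω = q1 ∧ π2 ω = q2 ∧ D ω = d) →
      cPr P (fun ω => Y2 ω = y)
        (fun ω => H ω = h ∧ π1 ω = q1 ∧ π2 ω = q2 ∧ D ω = d) = f h y)
    (π2' : Ω → ℝ)
    (hπ2' : ∀ ω, π2' ω = if D ω = true then Tm (π2 ω) (Y2 ω) else π2 ω)
    (D' : Ω → Bool)
    (hD' : ∀ ω, D' ω = true ↔
      (D ω = true ∧ Tm (π2 ω) (Y2 ω) ∈ Set.Ioo α β))
    -- system 2
    (P' : Ω' → ℝ) (hP'nn : ∀ ω, 0 ≤ P' ω) (hP'sum : ∑ ω, P' ω = 1)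
    (H' : Ω' → Fin 2) (π1' : Ω' → B1) (π2x : Ω' → ℝ) (Dx : Ω' → Bool)
    (Y2' : Ω' → 𝒴)
    (hci' : ∀ (y : 𝒴) (h : Fin 2) (q1 : B1) (q2 : ℝ) (d : Bool),
      0 < Pr P' (fun ω => H' ω = h ∧ π1' ω = q1 ∧ π2x ω = q2 ∧ Dx ω = d) →
      cPr P' (fun ω => Y2' ω = y)
        (fun ω => H' ω = h ∧ π1' ω = q1 ∧ π2x ω = q2 ∧ Dx ω = d) = f h y)
    (π2x' : Ω' → ℝ)
    (hπ2x' : ∀ ω, π2x' ω = if Dx ω = true then Tm (π2x ω) (Y2' ω) else π2x ω)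
    (Dx' : Ω' → Bool)
    (hDx' : ∀ ω, Dx' ω = true ↔
      (Dx ω = true ∧ Tm (π2x ω) (Y2' ω) ∈ Set.Ioo α β))
    -- equal prior joint laws
    (hlaw : ∀ (h : Fin 2) (q1 : B1) (q2 : ℝ) (d : Bool),
      Pr P (fun ω => H ω = h ∧ π1 ω = q1 ∧ π2 ω = q2 ∧ D ω = d) =
        Pr P' (fun ω => H' ω = h ∧ π1' ω = q1 ∧ π2x ω = q2 ∧ Dx ω = d)) :
    -- equal updated joint laws
    ∀ (h : Fin 2) (q1 : B1) (q2 : ℝ) (d : Bool),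
      Pr P (fun ω => H ω = h ∧ π1 ω = q1 ∧ π2' ω = q2 ∧ D' ω = d) =
        Pr P' (fun ω => H' ω = h ∧ π1' ω = q1 ∧ π2x' ω = q2 ∧ Dx' ω = d) := by
  intro h q1 q2 d
  have hS1 : ∀ ω, π2 ω ∈ (Finset.univ.image π2 ∪ Finset.univ.image π2x) := fun ω =>
    Finset.mem_union_left _ (Finset.mem_image_of_mem _ (Finset.mem_univ ω))
  have hS2 : ∀ ω, π2x ω ∈ (Finset.univ.image π2 ∪ Finset.univ.image π2x) := fun ω =>
    Finset.mem_union_right _ (Finset.mem_image_of_mem _ (Finset.mem_univ ω))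
  have boolIff : ∀ a b : Bool, a = b ↔ (b = true ↔ a = true) := by decide
  have key1 := keyLemma f P hPnn H π1 π2 D Y2 hci
    (Finset.univ.image π2 ∪ Finset.univ.image π2x) hS1
    (fun h' q1' r d' y => h' = h ∧ q1' = q1 ∧ (if d' = true then Tm r y else r) = q2 ∧
      (d = true ↔ (d' = true ∧ Tm r y ∈ Set.Ioo α β)))
  have key2 := keyLemma f P' hP'nn H' π1' π2x Dx Y2' hci'
    (Finset.univ.image π2 ∪ Finset.univ.image π2x) hS2
    (fun h' q1' r d' y => h' = h ∧ q1' = q1 ∧ (if d' = true then Tm r y else r) = q2 ∧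
      (d = true ↔ (d' = true ∧ Tm r y ∈ Set.Ioo α β)))
  have hE1 : ∀ ω, (H ω = h ∧ π1 ω = q1 ∧ π2' ω = q2 ∧ D' ω = d) ↔
      (H ω = h ∧ π1 ω = q1 ∧ (if D ω = true then Tm (π2 ω) (Y2 ω) else π2 ω) = q2 ∧
        (d = true ↔ (D ω = true ∧ Tm (π2 ω) (Y2 ω) ∈ Set.Ioo α β))) := by
    intro ω
    have hd : (D' ω = d) ↔ (d = true ↔ (D ω = true ∧ Tm (π2 ω) (Y2 ω) ∈ Set.Ioo α β)) := by
      rw [boolIff (D' ω) d, hD' ω]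
    rw [hπ2' ω, hd]
  have hE2 : ∀ ω, (H' ω = h ∧ π1' ω = q1 ∧ π2x' ω = q2 ∧ Dx' ω = d) ↔
      (H' ω = h ∧ π1' ω = q1 ∧ (if Dx ω = true then Tm (π2x ω) (Y2' ω) else π2x ω) = q2 ∧
        (d = true ↔ (Dx ω = true ∧ Tm (π2x ω) (Y2' ω) ∈ Set.Ioo α β))) := by
    intro ω
    have hd : (Dx' ω = d) ↔ (d = true ↔ (Dx ω = true ∧ Tm (π2x ω) (Y2' ω) ∈ Set.Ioo α β)) := by
      rw [boolIff (Dx' ω) d, hDx' ω]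
    rw [hπ2x' ω, hd]
  rw [Pr_congr P hE1, Pr_congr P' hE2, key1, key2]
  refine Finset.sum_congr rfl fun h' _ => Finset.sum_congr rfl fun q1' _ =>
    Finset.sum_congr rfl fun r _ => Finset.sum_congr rfl fun d' _ =>
    Finset.sum_congr rfl fun y _ => ?_
  rw [hlaw h' q1' r d']
end
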